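/- Let κ be a regular uncountable cardinal. Then the full κ-bounded powerset monad P_κ is tensorable: for every monad T on the category Type u of sets, the forgetful functor from the category TAlg(P_κ, T) of (P_κ, T)-tensor algebras to Type u has a left adjoint (i.e., the tensor P_κ ⊗ T exists). -/

import Mathlib

open CategoryTheory

universe u

/-- Underlying object map of the full `κ`-bounded powerset monad. -/
def PfullObj (κ : Cardinal.{u}) (X : Type u) : Type u :=
  {s : Set X // Cardinal.mk s < κ}

namespace PfullObj

variable {κ : Cardinal.{u}}

/-- Direct image. -/
def fmap {X Y : Type u} (f : X → Y) (s : PfullObj κ X) : PfullObj κ Y :=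
  ⟨f '' s.1, Cardinal.mk_image_le.trans_lt s.2⟩

@[simp] theorem fmap_coe {X Y : Type u} (f : X → Y) (s : PfullObj κ X) :
    (fmap f s).1 = f '' s.1 := rfl

/-- Unit: singletons. -/
def eta (hκ : κ.IsRegular) {X : Type u} (x : X) : PfullObj κ X :=
  ⟨{x}, by
    rw [Cardinal.mk_singleton]
    exact lt_of_lt_of_le Cardinal.one_lt_aleph0 hκ.aleph0_le⟩

@[simp] theorem eta_coe (hκ : κ.IsRegular) {X : Type u} (x : X) :
    (eta hκ x : PfullObj κ X).1 = {x} := rfl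

/-- Multiplication: union. -/
def mu (hκ : κ.IsRegular) {X : Type u} (S : PfullObj κ (PfullObj κ X)) : PfullObj κ X :=
  ⟨⋃ t ∈ S.1, t.1,
    (Cardinal.card_biUnion_lt_iff_forall_of_isRegular hκ S.2).mpr fun t _ => t.2⟩

@[simp] theorem mu_coe (hκ : κ.IsRegular) {X : Type u} (S : PfullObj κ (PfullObj κ X)) :
    (mu hκ S).1 = ⋃ t ∈ S.1, t.1 := rfl

end PfullObj

/-- The full `κ`-bounded powerset monad `P_κ`: it sends a set `X` to the set of all
subsets of `X` of cardinality `< κ`, acts by direct image, has unit `x ↦ {x}` and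
multiplication given by union. -/
def Pfull (κ : Cardinal.{u}) (hκ : κ.IsRegular) : Monad (Type u) where
  obj X := PfullObj κ X
  map f := TypeCat.ofHom (PfullObj.fmap f)
  map_id X := by
    refine ConcreteCategory.hom_ext _ _ fun s => ?_
    apply Subtype.ext
    simp [PfullObj.fmap]
  map_comp {X Y Z} f g := by
    refine ConcreteCategory.hom_ext _ _ fun s => ?_
    apply Subtype.ext
    show ((f ≫ g) '' s.1 : Set Z) = g '' (f '' s.1)
    simp [Set.image_image]
  η :=
    { app := fun X => TypeCat.ofHom (fun x => PfullObj.eta hκ x)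
      naturality := fun X Y f => by
        refine ConcreteCategory.hom_ext _ _ fun x => ?_
        apply Subtype.ext
        show ({f x} : Set Y) = f '' {x}
        simp }
  μ :=
    { app := fun X => TypeCat.ofHom (fun S => PfullObj.mu hκ S)
      naturality := fun X Y f => by
        refine ConcreteCategory.hom_ext _ _ fun S => ?_
        apply Subtype.ext
        show (⋃ t ∈ (PfullObj.fmap (PfullObj.fmap f) S).1, t.1 : Set Y)
          = f '' (⋃ t ∈ S.1, t.1)
        ext y
        simp only [PfullObj.fmap_coe, Set.mem_iUnion, Set.mem_image]
        constructor
        · rintro ⟨t, ⟨⟨u, hu, rfl⟩, hy⟩⟩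
          simp only [PfullObj.fmap_coe, Set.mem_image] at hy
          obtain ⟨x, hx, rfl⟩ := hy
          exact ⟨x, ⟨u, hu, hx⟩, rfl⟩
        · rintro ⟨x, ⟨⟨u, hu, hx⟩, rfl⟩⟩
          exact ⟨PfullObj.fmap f u, ⟨⟨u, hu, rfl⟩, by
            simp only [PfullObj.fmap_coe]
            exact ⟨x, hx, rfl⟩⟩⟩ }
  left_unit X := by
    refine ConcreteCategory.hom_ext _ _ fun S => ?_
    apply Subtype.ext
    show (⋃ t ∈ (PfullObj.eta hκ S).1, t.1 : Set X) = S.1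
    simp
  right_unit X := by
    refine ConcreteCategory.hom_ext _ _ fun S => ?_
    apply Subtype.ext
    show (⋃ t ∈ (PfullObj.fmap (PfullObj.eta hκ) S).1, t.1 : Set X) = S.1
    ext y
    simp
  assoc X := by
    refine ConcreteCategory.hom_ext _ _ fun SS => ?_
    apply Subtype.ext
    show (⋃ t ∈ (PfullObj.fmap (PfullObj.mu hκ) SS).1, t.1 : Set X)
      = ⋃ t ∈ (PfullObj.mu hκ SS).1, t.1
    ext y
    simp only [PfullObj.fmap_coe, PfullObj.mu_coe, Set.mem_iUnion, Set.mem_image]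
    constructor
    · rintro ⟨t, ⟨⟨U, hU, rfl⟩, hy⟩⟩
      simp only [PfullObj.mu_coe, Set.mem_iUnion] at hy
      obtain ⟨u, hu, hy⟩ := hy
      exact ⟨u, ⟨⟨U, hU, hu⟩, hy⟩⟩
    · rintro ⟨u, ⟨⟨U, hU, hu⟩, hy⟩⟩
      exact ⟨PfullObj.mu hκ U, ⟨⟨U, hU, rfl⟩, by
        simp only [PfullObj.mu_coe, Set.mem_iUnion]
        exact ⟨u, hu, hy⟩⟩⟩

/-- A `(T,S)`-tensor algebra: a set with Eilenberg–Moore algebra structures for both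
monads, satisfying the tensor law. -/
structure TensorAlg (T S : Monad (Type u)) where
  carrier : Type u
  α : T.obj carrier → carrier
  β : S.obj carrier → carrier
  α_unit : ∀ x : carrier, α (T.η.app carrier x) = x
  α_mul : ∀ m : T.obj (T.obj carrier), α (T.μ.app carrier m) = α (T.map (TypeCat.ofHom α) m)
  β_unit : ∀ x : carrier, β (S.η.app carrier x) = x
  β_mul : ∀ m : S.obj (S.obj carrier), β (S.μ.app carrier m) = β (S.map (TypeCat.ofHom β) m)
  tensor_law : ∀ {Y Z : Type u} (p : T.obj Y) (q : S.obj Z) (f : Y × Z → carrier),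
    α (T.map (TypeCat.ofHom (fun y => β (S.map (TypeCat.ofHom (fun z => f (y, z))) q))) p) =
      β (S.map (TypeCat.ofHom (fun z => α (T.map (TypeCat.ofHom (fun y => f (y, z))) p))) q)

/-- Morphisms of tensor algebras: maps homomorphic for both structures. -/
@[ext]
structure TensorAlgHom {T S : Monad (Type u)} (A B : TensorAlg T S) where
  toFun : A.carrier → B.carrier
  map_α : ∀ m : T.obj A.carrier, toFun (A.α m) = B.α (T.map (TypeCat.ofHom toFun) m)
  map_β : ∀ m : S.obj A.carrier, toFun (A.β m) = B.β (S.map (TypeCat.ofHom toFun) m)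

instance TensorAlg.instCategory {T S : Monad (Type u)} : Category (TensorAlg T S) where
  Hom A B := TensorAlgHom A B
  id A :=
    { toFun := id
      map_α := fun m => by
        show A.α m = A.α (T.map (𝟙 A.carrier) m)
        rw [FunctorToTypes.map_id_apply]
      map_β := fun m => by
        show A.β m = A.β (S.map (𝟙 A.carrier) m)
        rw [FunctorToTypes.map_id_apply] }
  comp {A B C} f g :=
    { toFun := g.toFun ∘ f.toFun
      map_α := fun m => by
        show g.toFun (f.toFun (A.α m)) = C.α (T.map (TypeCat.ofHom (g.toFun ∘ f.toFun)) m)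
        rw [f.map_α, g.map_α]
        congr 1
        exact (FunctorToTypes.map_comp_apply T.toFunctor (TypeCat.ofHom f.toFun) (TypeCat.ofHom g.toFun) m).symm
      map_β := fun m => by
        show g.toFun (f.toFun (A.β m)) = C.β (S.map (TypeCat.ofHom (g.toFun ∘ f.toFun)) m)
        rw [f.map_β, g.map_β]
        congr 1
        exact (FunctorToTypes.map_comp_apply S.toFunctor (TypeCat.ofHom f.toFun) (TypeCat.ofHom g.toFun) m).symm }
  id_comp f := by apply TensorAlgHom.ext; rfl
  comp_id f := by apply TensorAlgHom.ext; rfl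
  assoc f g h := by apply TensorAlgHom.ext; rfl

/-- The forgetful functor from `(T,S)`-tensor algebras to sets. -/
def forgetTAlg (T S : Monad (Type u)) : TensorAlg T S ⥤ Type u where
  obj A := A.carrier
  map f := TypeCat.ofHom (TensorAlgHom.toFun f)
  map_id _ := rfl
  map_comp _ _ := rfl


namespace PfullTensor

open CategoryTheory Limits

noncomputable section

/-! ### Pointwise monad lemmas -/

theorem eta_nat (M : Monad (Type u)) {X Y : Type u} (f : X → Y) (x : X) :
    M.η.app Y (f x) = M.map (TypeCat.ofHom f) (M.η.app X x) :=
  NatTrans.naturality_apply M.η (TypeCat.ofHom f) x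

theorem mu_nat (M : Monad (Type u)) {X Y : Type u} (f : X → Y) (m : M.obj (M.obj X)) :
    M.μ.app Y (M.map (TypeCat.ofHom (M.map (TypeCat.ofHom f))) m) = M.map (TypeCat.ofHom f) (M.μ.app X m) :=
  NatTrans.naturality_apply M.μ (TypeCat.ofHom f) m

theorem map_map (M : Monad (Type u)) {X Y Z : Type u} (f : X → Y) (g : Y → Z) (m : M.obj X) :
    M.map (TypeCat.ofHom g) (M.map (TypeCat.ofHom f) m) = M.map (TypeCat.ofHom (fun x => g (f x))) m :=
  (FunctorToTypes.map_comp_apply M.toFunctor (TypeCat.ofHom f) (TypeCat.ofHom g) m).symm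

/-! ### Closure of a subset under a single Eilenberg–Moore operation -/

section ClSet

variable (M : Monad (Type u)) {c : Type u} (op : M.obj c → c)

/-- One-step closure of `B` under the operation `op`. -/
def clSet (B : Set c) : Set c :=
  Set.range fun p : M.obj B => op (M.map (TypeCat.ofHom (Subtype.val : B → c)) p)

theorem mem_clSet_of_map {B : Set c} (p : M.obj B) : op (M.map (TypeCat.ofHom Subtype.val) p) ∈ clSet M op B :=
  ⟨p, rfl⟩

theorem subset_clSet (hunit : ∀ x : c, op (M.η.app c x) = x) (B : Set c) : B ⊆ clSet M op B := by
  intro b hb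
  refine ⟨M.η.app B ⟨b, hb⟩, ?_⟩
  show op (M.map (TypeCat.ofHom Subtype.val) (M.η.app B ⟨b, hb⟩)) = b
  rw [← eta_nat M (Subtype.val : B → c) ⟨b, hb⟩, hunit]

theorem clSet_mono {B B' : Set c} (h : B ⊆ B') : clSet M op B ⊆ clSet M op B' := by
  rintro x ⟨p, rfl⟩
  refine ⟨M.map (TypeCat.ofHom (Set.inclusion h)) p, ?_⟩
  show op (M.map (TypeCat.ofHom Subtype.val) (M.map (TypeCat.ofHom (Set.inclusion h)) p)) = op (M.map (TypeCat.ofHom Subtype.val) p)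
  rw [map_map]

theorem op_mem_clSet
    (hmul : ∀ m : M.obj (M.obj c), op (M.μ.app c m) = op (M.map (TypeCat.ofHom op) m))
    (B : Set c) (p : M.obj (clSet M op B)) :
    op (M.map (TypeCat.ofHom Subtype.val) p) ∈ clSet M op B := by
  classical
  have hσ : ∀ x : clSet M op B, ∃ q : M.obj B, op (M.map (TypeCat.ofHom Subtype.val) q) = x.val := fun x => x.2
  choose σ hσ using hσ
  refine ⟨M.μ.app B (M.map (TypeCat.ofHom σ) p), ?_⟩
  show op (M.map (TypeCat.ofHom Subtype.val) (M.μ.app B (M.map (TypeCat.ofHom σ) p))) = op (M.map (TypeCat.ofHom Subtype.val) p)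
  have h1 : M.map (TypeCat.ofHom (Subtype.val : B → c)) (M.μ.app B (M.map (TypeCat.ofHom σ) p))
      = M.μ.app c (M.map (TypeCat.ofHom (M.map (TypeCat.ofHom (Subtype.val : B → c)))) (M.map (TypeCat.ofHom σ) p)) := by
    rw [mu_nat]
  rw [h1, hmul, map_map, map_map]
  have h2 : (fun x : clSet M op B => op (M.map (TypeCat.ofHom Subtype.val) (σ x))) = Subtype.val := funext hσ
  rw [h2]

theorem mk_clSet_le (B : Set c) : Cardinal.mk (clSet M op B) ≤ Cardinal.mk (M.obj B) :=
  Cardinal.mk_range_le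

end ClSet

end

end PfullTensor
namespace PfullTensor

noncomputable section

section Alg

open CategoryTheory

variable {M N : Monad (Type u)}

/-- A subset closed under both operations. -/
def IsClosed (A : TensorAlg M N) (B : Set A.carrier) : Prop :=
  (∀ p : M.obj B, A.α (M.map (TypeCat.ofHom Subtype.val) p) ∈ B) ∧
  (∀ q : N.obj B, A.β (N.map (TypeCat.ofHom Subtype.val) q) ∈ B)

theorem isClosed_sInter {A : TensorAlg M N} {𝒞 : Set (Set A.carrier)}
    (h : ∀ B ∈ 𝒞, IsClosed A B) : IsClosed A (⋂₀ 𝒞) := by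
  constructor
  · intro p B hB
    have := (h B hB).1 (M.map (TypeCat.ofHom (Set.inclusion (Set.sInter_subset_of_mem hB))) p)
    rwa [map_map] at this
  · intro q B hB
    have := (h B hB).2 (N.map (TypeCat.ofHom (Set.inclusion (Set.sInter_subset_of_mem hB))) q)
    rwa [map_map] at this

/-- The tensor subalgebra on a closed subset. -/
def subalg (A : TensorAlg M N) (B : Set A.carrier) (h : IsClosed A B) : TensorAlg M N where
  carrier := B
  α p := ⟨A.α (M.map (TypeCat.ofHom Subtype.val) p), h.1 p⟩
  β q := ⟨A.β (N.map (TypeCat.ofHom Subtype.val) q), h.2 q⟩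
  α_unit x := Subtype.ext (by
    show A.α (M.map (TypeCat.ofHom Subtype.val) (M.η.app _ x)) = x.val
    rw [← eta_nat, A.α_unit])
  α_mul m := Subtype.ext (by
    show A.α (M.map (TypeCat.ofHom Subtype.val) (M.μ.app _ m)) = A.α (M.map (TypeCat.ofHom Subtype.val) (M.map (TypeCat.ofHom _) m))
    rw [← mu_nat, A.α_mul, map_map, map_map])
  β_unit x := Subtype.ext (by
    show A.β (N.map (TypeCat.ofHom Subtype.val) (N.η.app _ x)) = x.val
    rw [← eta_nat, A.β_unit])
  β_mul m := Subtype.ext (by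
    show A.β (N.map (TypeCat.ofHom Subtype.val) (N.μ.app _ m)) = A.β (N.map (TypeCat.ofHom Subtype.val) (N.map (TypeCat.ofHom _) m))
    rw [← mu_nat, A.β_mul, map_map, map_map])
  tensor_law p q f := Subtype.ext (by
    show A.α (M.map (TypeCat.ofHom Subtype.val) (M.map (TypeCat.ofHom _) p)) = A.β (N.map (TypeCat.ofHom Subtype.val) (N.map (TypeCat.ofHom _) q))
    rw [map_map, map_map]
    simp only [map_map]
    exact A.tensor_law p q fun yz => (f yz).val)

@[simp] theorem subalg_α_val (A : TensorAlg M N) (B : Set A.carrier) (h : IsClosed A B)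
    (p : M.obj B) : ((subalg A B h).α p).val = A.α (M.map (TypeCat.ofHom Subtype.val) p) := rfl

@[simp] theorem subalg_β_val (A : TensorAlg M N) (B : Set A.carrier) (h : IsClosed A B)
    (q : N.obj B) : ((subalg A B h).β q).val = A.β (N.map (TypeCat.ofHom Subtype.val) q) := rfl

/-- Product of a family of tensor algebras. -/
def prodAlg {ι : Type u} (F : ι → TensorAlg M N) : TensorAlg M N where
  carrier := ∀ i, (F i).carrier
  α m := fun i => (F i).α (M.map (TypeCat.ofHom (fun g => g i)) m)
  β m := fun i => (F i).β (N.map (TypeCat.ofHom (fun g => g i)) m)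
  α_unit x := funext fun i => by
    dsimp only
    rw [← eta_nat]; exact (F i).α_unit (x i)
  α_mul m := funext fun i => by
    dsimp only
    rw [← mu_nat, (F i).α_mul, map_map, map_map]
  β_unit x := funext fun i => by
    dsimp only
    rw [← eta_nat]; exact (F i).β_unit (x i)
  β_mul m := funext fun i => by
    dsimp only
    rw [← mu_nat, (F i).β_mul, map_map, map_map]
  tensor_law p q f := funext fun i => by
    dsimp only
    rw [map_map, map_map]
    simp only [map_map]
    exact (F i).tensor_law p q fun yz => f yz i

/-- Transport of tensor algebra structure along an equivalence. -/
def transport (A : TensorAlg M N) {c : Type u} (e : A.carrier ≃ c) : TensorAlg M N where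
  carrier := c
  α p := e (A.α (M.map (TypeCat.ofHom e.symm) p))
  β q := e (A.β (N.map (TypeCat.ofHom e.symm) q))
  α_unit x := by dsimp only; rw [← eta_nat, A.α_unit, Equiv.apply_symm_apply]
  α_mul m := by
    dsimp only
    refine congrArg e ?_
    rw [← mu_nat, A.α_mul, map_map, map_map]
    simp only [Equiv.symm_apply_apply]
  β_unit x := by dsimp only; rw [← eta_nat, A.β_unit, Equiv.apply_symm_apply]
  β_mul m := by
    dsimp only
    refine congrArg e ?_
    rw [← mu_nat, A.β_mul, map_map, map_map]
    simp only [Equiv.symm_apply_apply]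
  tensor_law p q f := by
    dsimp only
    refine congrArg e ?_
    rw [map_map, map_map]
    simp only [map_map, Equiv.symm_apply_apply]
    exact A.tensor_law p q fun yz => e.symm (f yz)

/-- Bare data of a tensor algebra on a fixed carrier. -/
structure TAData (M N : Monad (Type u)) (c : Type u) where
  α : M.obj c → c
  β : N.obj c → c
  α_unit : ∀ x : c, α (M.η.app c x) = x
  α_mul : ∀ m : M.obj (M.obj c), α (M.μ.app c m) = α (M.map (TypeCat.ofHom α) m)
  β_unit : ∀ x : c, β (N.η.app c x) = x
  β_mul : ∀ m : N.obj (N.obj c), β (N.μ.app c m) = β (N.map (TypeCat.ofHom β) m)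
  tensor_law : ∀ {Y Z : Type u} (p : M.obj Y) (q : N.obj Z) (f : Y × Z → c),
    α (M.map (TypeCat.ofHom (fun y => β (N.map (TypeCat.ofHom (fun z => f (y, z))) q))) p) =
      β (N.map (TypeCat.ofHom (fun z => α (M.map (TypeCat.ofHom (fun y => f (y, z))) p))) q)

def TAData.toAlg {c : Type u} (d : TAData M N c) : TensorAlg M N :=
  ⟨c, d.α, d.β, d.α_unit, d.α_mul, d.β_unit, d.β_mul, d.tensor_law⟩

def algData (A : TensorAlg M N) : TAData M N A.carrier :=
  ⟨A.α, A.β, A.α_unit, A.α_mul, A.β_unit, A.β_mul, A.tensor_law⟩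

end Alg

end

end PfullTensor
namespace PfullTensor

noncomputable section

open CategoryTheory

section Construction

variable {κ : Cardinal.{u}} {hκ : κ.IsRegular} {T : Monad (Type u)}

/-- Join-closure (one step) inside a tensor algebra for `P_κ`. -/
def Jcl (A : TensorAlg (Pfull κ hκ) T) (B : Set A.carrier) : Set A.carrier :=
  clSet (Pfull κ hκ) A.α B

/-- `T`-closure (one step). -/
def Tcl (A : TensorAlg (Pfull κ hκ) T) (B : Set A.carrier) : Set A.carrier :=
  clSet T A.β B

theorem subset_jcl (A : TensorAlg (Pfull κ hκ) T) (B : Set A.carrier) : B ⊆ Jcl A B :=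
  subset_clSet _ _ A.α_unit B

theorem subset_tcl (A : TensorAlg (Pfull κ hκ) T) (B : Set A.carrier) : B ⊆ Tcl A B :=
  subset_clSet _ _ A.β_unit B

theorem jcl_nonempty (A : TensorAlg (Pfull κ hκ) T) (B : Set A.carrier) :
    (Jcl A B).Nonempty := by
  have h0 : Cardinal.mk (↥(∅ : Set B)) < κ := by
    rw [Cardinal.mk_emptyCollection]
    exact Cardinal.aleph0_pos.trans_le hκ.aleph0_le
  exact ⟨_, ⟨⟨(∅ : Set B), h0⟩, rfl⟩⟩

/-- The countable chain of alternating closures. -/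
def Cset {X : Type u} (A : TensorAlg (Pfull κ hκ) T) (u : X → A.carrier) : ℕ → Set A.carrier
  | 0 => Tcl A (Jcl A (Set.range u))
  | n + 1 => Tcl A (Jcl A (Cset A u n))

/-- The union of the chain. -/
def CU {X : Type u} (A : TensorAlg (Pfull κ hκ) T) (u : X → A.carrier) : Set A.carrier :=
  ⋃ n : ULift.{u} ℕ, Cset A u n.down

/-- The closed set generated by the range of `u`. -/
def Dset {X : Type u} (A : TensorAlg (Pfull κ hκ) T) (u : X → A.carrier) : Set A.carrier :=
  Jcl A (CU A u)

theorem cset_subset_cu {X : Type u} (A : TensorAlg (Pfull κ hκ) T) (u : X → A.carrier) (n : ℕ) :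
    Cset A u n ⊆ CU A u := by
  intro a ha
  exact Set.mem_iUnion.mpr ⟨ULift.up n, ha⟩

theorem jcl_cset_subset {X : Type u} (A : TensorAlg (Pfull κ hκ) T) (u : X → A.carrier) (n : ℕ) :
    Jcl A (Cset A u n) ⊆ Cset A u (n + 1) :=
  subset_tcl A _

theorem range_subset_dset {X : Type u} (A : TensorAlg (Pfull κ hκ) T) (u : X → A.carrier) :
    Set.range u ⊆ Dset A u :=
  fun a ha => subset_jcl A _ (cset_subset_cu A u 0
    (subset_tcl A _ (subset_jcl A _ ha)))

/-! ### Cardinality bounds -/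

theorem mk_obj_le_of_le (N : Monad (Type u)) {Y Z : Type u} [Nonempty Y]
    (h : Cardinal.mk Y ≤ Cardinal.mk Z) : Cardinal.mk (N.obj Y) ≤ Cardinal.mk (N.obj Z) := by
  obtain ⟨f⟩ := (Cardinal.le_def _ _).mp h
  have hli : Function.LeftInverse (N.map (TypeCat.ofHom (Function.invFun f))) (N.map (TypeCat.ofHom (f : Y → Z))) := by
    intro x
    rw [map_map]
    have : (fun y => Function.invFun (f : Y → Z) (f y)) = 𝟙 Y :=
      funext fun y => Function.leftInverse_invFun f.injective y
    rw [this]; exact FunctorToTypes.map_id_apply N.toFunctor x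
  exact Cardinal.mk_le_of_injective hli.injective

theorem mk_pobj_le (Y : Type u) :
    Cardinal.mk ((Pfull κ hκ).obj Y) ≤ Cardinal.mk (Set Y) :=
  Cardinal.mk_subtype_le _

theorem mk_jcl_le (A : TensorAlg (Pfull κ hκ) T) (B : Set A.carrier) :
    Cardinal.mk (Jcl A B) ≤ Cardinal.mk (Set B) :=
  (mk_clSet_le (Pfull κ hκ) A.α B).trans (mk_pobj_le _)

theorem step_bound {A : TensorAlg (Pfull κ hκ) T} {B : Set A.carrier} {W : Type u}
    (h : Cardinal.mk B ≤ Cardinal.mk W) :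
    Cardinal.mk (Tcl A (Jcl A B)) ≤ Cardinal.mk (T.obj (Set W)) := by
  have h1 : Cardinal.mk (Jcl A B) ≤ Cardinal.mk (Set W) := by
    refine (mk_jcl_le A B).trans ?_
    rw [Cardinal.mk_set, Cardinal.mk_set]
    exact Cardinal.power_le_power_left two_ne_zero h
  haveI : Nonempty (Jcl A B) := (jcl_nonempty A B).to_subtype
  exact (mk_clSet_le T A.β _).trans (mk_obj_le_of_le T h1)

/-- The cardinal bounding chain (depends only on `T` and `X`). -/
def Wchain (T : Monad (Type u)) (X : Type u) : ℕ → Type u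
  | 0 => X
  | n + 1 => T.obj (Set (Wchain T X n))

/-- A bound for the generated closed set, depending only on `T` and `X`. -/
def VType (T : Monad (Type u)) (X : Type u) : Type u :=
  Set (Σ n : ULift.{u} ℕ, Wchain T X (n.down + 1))

theorem mk_cset_le {X : Type u} (A : TensorAlg (Pfull κ hκ) T) (u : X → A.carrier) (n : ℕ) :
    Cardinal.mk (Cset A u n) ≤ Cardinal.mk (Wchain T X (n + 1)) := by
  induction n with
  | zero => exact step_bound Cardinal.mk_range_le
  | succ n ih => exact step_bound ih

theorem mk_dset_le {X : Type u} (A : TensorAlg (Pfull κ hκ) T) (u : X → A.carrier) :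
    Cardinal.mk (Dset A u) ≤ Cardinal.mk (VType T X) := by
  have hcu : Cardinal.mk (CU A u) ≤ Cardinal.mk (Σ n : ULift.{u} ℕ, Wchain T X (n.down + 1)) := by
    refine (Cardinal.mk_iUnion_le_sum_mk).trans ?_
    rw [Cardinal.mk_sigma]
    exact Cardinal.sum_le_sum _ _ fun n => mk_cset_le A u n.down
  refine (mk_jcl_le A _).trans ?_
  rw [Cardinal.mk_set]
  show (2 : Cardinal.{u}) ^ Cardinal.mk (CU A u) ≤ Cardinal.mk (VType T X)
  rw [show Cardinal.mk (VType T X) = 2 ^ Cardinal.mk (Σ n : ULift.{u} ℕ, Wchain T X (n.down + 1))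
    from Cardinal.mk_set]
  exact Cardinal.power_le_power_left two_ne_zero hcu

end Construction

end

end PfullTensor
namespace PfullTensor

noncomputable section

open CategoryTheory

section KeyLemma

variable {κ : Cardinal.{u}} {hκ : κ.IsRegular} {T : Monad (Type u)} {X : Type u}

/-- Chosen representation of an element of `Dset` as a small join over `CU`. -/
def sdFun (A : TensorAlg (Pfull κ hκ) T) (u : X → A.carrier) (d : (Dset A u)) :
    (Pfull κ hκ).obj (CU A u) :=
  d.2.choose

theorem sdFun_spec (A : TensorAlg (Pfull κ hκ) T) (u : X → A.carrier) (d : (Dset A u)) :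
    A.α ((Pfull κ hκ).map (TypeCat.ofHom Subtype.val) (sdFun A u d)) = d.val :=
  d.2.choose_spec

/-- The underlying small subset of `A.carrier` representing `d`. -/
def udFun (A : TensorAlg (Pfull κ hκ) T) (u : X → A.carrier) (d : (Dset A u)) :
    (Pfull κ hκ).obj A.carrier :=
  (Pfull κ hκ).map (TypeCat.ofHom Subtype.val) (sdFun A u d)

theorem udFun_subset (A : TensorAlg (Pfull κ hκ) T) (u : X → A.carrier) (d : (Dset A u)) :
    (udFun A u d).1 ⊆ CU A u := by
  rintro a ⟨x, _, rfl⟩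
  exact x.2

/-- The `n`-th slice of the representation of `d`. -/
def ttFun (A : TensorAlg (Pfull κ hκ) T) (u : X → A.carrier) (n : ℕ) (d : (Dset A u)) :
    (Pfull κ hκ).obj A.carrier :=
  ⟨(udFun A u d).1 ∩ Cset A u n,
    (Cardinal.mk_le_mk_of_subset Set.inter_subset_left).trans_lt (udFun A u d).2⟩

/-- The interchange function used in the tensor law. -/
def fFun (A : TensorAlg (Pfull κ hκ) T) (u : X → A.carrier) :
    ULift.{u} ℕ × (Dset A u) → A.carrier :=
  fun yd => A.α (ttFun A u yd.1.down yd.2)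

/-- The set of all natural numbers, as an object of `P_κ` (uses `ℵ₀ < κ`). -/
def pNat (hκ : κ.IsRegular) (hunc : Cardinal.aleph0 < κ) : (Pfull κ hκ).obj (ULift.{u} ℕ) :=
  ⟨Set.univ, by
    rw [Cardinal.mk_univ, Cardinal.mk_eq_aleph0]
    exact hunc⟩

theorem fFun_row (hunc : Cardinal.aleph0 < κ) (A : TensorAlg (Pfull κ hκ) T)
    (u : X → A.carrier) (z : (Dset A u)) :
    A.α ((Pfull κ hκ).map (TypeCat.ofHom (fun y => fFun A u (y, z))) (pNat hκ hunc)) = z.val := by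
  have h1 : (Pfull κ hκ).map (TypeCat.ofHom (fun y => fFun A u (y, z))) (pNat hκ hunc)
      = (Pfull κ hκ).map (TypeCat.ofHom A.α) ((Pfull κ hκ).map (TypeCat.ofHom (fun y : ULift.{u} ℕ => ttFun A u y.down z))
          (pNat hκ hunc)) := by
    rw [map_map]
    rfl
  have h2 : (Pfull κ hκ).μ.app A.carrier
      ((Pfull κ hκ).map (TypeCat.ofHom (fun y : ULift.{u} ℕ => ttFun A u y.down z)) (pNat hκ hunc))
      = udFun A u z := by
    apply Subtype.ext
    show (⋃ t ∈ ((fun y : ULift.{u} ℕ => ttFun A u y.down z) '' Set.univ), t.1)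
      = (udFun A u z).1
    ext a
    simp only [Set.mem_iUnion, Set.mem_image, Set.mem_univ, true_and]
    constructor
    · rintro ⟨t, ⟨y, rfl⟩, hat⟩
      exact hat.1
    · intro ha
      obtain ⟨n, hn⟩ := Set.mem_iUnion.mp (udFun_subset A u z ha)
      exact ⟨ttFun A u n.down z, ⟨n, rfl⟩, ha, hn⟩
  rw [h1, ← A.α_mul, h2]
  exact sdFun_spec A u z

theorem fFun_col_mem (A : TensorAlg (Pfull κ hκ) T) (u : X → A.carrier)
    (n : ℕ) (z : (Dset A u)) :
    A.α (ttFun A u n z) ∈ Jcl A (Cset A u n) := by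
  have hlt : Cardinal.mk (Subtype.val ⁻¹' (ttFun A u n z).1 : Set (Cset A u n)) < κ :=
    (Cardinal.mk_preimage_of_injective _ _ Subtype.val_injective).trans_lt (ttFun A u n z).2
  refine ⟨⟨Subtype.val ⁻¹' (ttFun A u n z).1, hlt⟩, ?_⟩
  show A.α ((Pfull κ hκ).map (TypeCat.ofHom Subtype.val) _) = A.α (ttFun A u n z)
  congr 1
  apply Subtype.ext
  show Subtype.val '' (Subtype.val ⁻¹' (ttFun A u n z).1) = (ttFun A u n z).1
  rw [Set.image_preimage_eq_inter_range, Subtype.range_coe]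
  exact Set.inter_eq_left.mpr Set.inter_subset_right

theorem dset_isClosed (hunc : Cardinal.aleph0 < κ) (A : TensorAlg (Pfull κ hκ) T)
    (u : X → A.carrier) : IsClosed A (Dset A u) := by
  constructor
  · intro p
    exact op_mem_clSet (Pfull κ hκ) A.α A.α_mul (CU A u) p
  · intro q
    have key := A.tensor_law (pNat hκ hunc) q (fFun A u)
    have hr : (fun z : (Dset A u) =>
        A.α ((Pfull κ hκ).map (TypeCat.ofHom (fun y => fFun A u (y, z))) (pNat hκ hunc)))
        = (Subtype.val : (Dset A u) → A.carrier) :=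
      funext fun z => fFun_row hunc A u z
    rw [hr] at key
    rw [← key]
    -- now show the LHS of the tensor law lies in `Dset`
    have hcol : ∀ y : ULift.{u} ℕ,
        A.β (T.map (TypeCat.ofHom (fun z => fFun A u (y, z))) q) ∈ Cset A u (y.down + 1) := by
      intro y
      set gg : (Dset A u) → (Cset A u (y.down + 1)) := fun z =>
        ⟨A.α (ttFun A u y.down z), jcl_cset_subset A u y.down (fFun_col_mem A u y.down z)⟩
        with hgg
      have h3 : (fun z : (Dset A u) => fFun A u (y, z)) = fun z => (gg z).val := rfl
      rw [h3]
      have h4 : T.map (TypeCat.ofHom (fun z : (Dset A u) => (gg z).val)) q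
          = T.map (TypeCat.ofHom Subtype.val) (T.map (TypeCat.ofHom gg) q) := by rw [map_map]
      rw [h4]
      exact op_mem_clSet T A.β A.β_mul (Jcl A (Cset A u y.down)) (T.map (TypeCat.ofHom gg) q)
    set hh : ULift.{u} ℕ → (CU A u) := fun y =>
      ⟨A.β (T.map (TypeCat.ofHom (fun z => fFun A u (y, z))) q),
        cset_subset_cu A u (y.down + 1) (hcol y)⟩ with hhh
    have h5 : (fun y : ULift.{u} ℕ => A.β (T.map (TypeCat.ofHom (fun z => fFun A u (y, z))) q))
        = fun y => (hh y).val := rfl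
    rw [h5]
    have h6 : (Pfull κ hκ).map (TypeCat.ofHom (fun y : ULift.{u} ℕ => (hh y).val)) (pNat hκ hunc)
        = (Pfull κ hκ).map (TypeCat.ofHom Subtype.val) ((Pfull κ hκ).map (TypeCat.ofHom hh) (pNat hκ hunc)) := by
      rw [map_map]
    rw [h6]
    exact mem_clSet_of_map (Pfull κ hκ) A.α ((Pfull κ hκ).map (TypeCat.ofHom hh) (pNat hκ hunc))

end KeyLemma

end

end PfullTensor
namespace PfullTensor

noncomputable section

open CategoryTheory

section Homs

variable {M N : Monad (Type u)}

/-- Inclusion of a subalgebra is a homomorphism. -/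
def subalgHom (A : TensorAlg M N) (B : Set A.carrier) (h : IsClosed A B) :
    TensorAlgHom (subalg A B h) A where
  toFun := Subtype.val
  map_α _ := rfl
  map_β _ := rfl

/-- Projection out of a product algebra is a homomorphism. -/
def prodProj {ι : Type u} (F : ι → TensorAlg M N) (i : ι) :
    TensorAlgHom (prodAlg F) (F i) where
  toFun g := g i
  map_α _ := rfl
  map_β _ := rfl

/-- The inverse of a transport equivalence is a homomorphism. -/
def transportHomInv (A : TensorAlg M N) {c : Type u} (e : A.carrier ≃ c) :
    TensorAlgHom (transport A e) A where
  toFun := e.symm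
  map_α m := by
    have h : (transport A e).α m = e (A.α (M.map (TypeCat.ofHom (⇑e.symm)) m)) := rfl
    rw [h, Equiv.symm_apply_apply]; rfl
  map_β m := by
    have h : (transport A e).β m = e (A.β (N.map (TypeCat.ofHom (⇑e.symm)) m)) := rfl
    rw [h, Equiv.symm_apply_apply]; rfl

/-- Composition of homomorphisms of tensor algebras. -/
def compHom {A B C : TensorAlg M N} (f : TensorAlgHom A B) (g : TensorAlgHom B C) :
    TensorAlgHom A C :=
  (f ≫ g : A ⟶ C)

theorem compHom_toFun {A B C : TensorAlg M N} (f : TensorAlgHom A B) (g : TensorAlgHom B C)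
    (x : A.carrier) : (compHom f g).toFun x = g.toFun (f.toFun x) := rfl

end Homs

section Free

variable {κ : Cardinal.{u}} {hκ : κ.IsRegular} {T : Monad (Type u)}

variable (hκ) (T) in
/-- Index of all "test" tensor algebras on subsets of `VType T X`, with a map from `X`. -/
def Idx (X : Type u) : Type u :=
  Σ c : Set (VType T X), TAData (Pfull κ hκ) T c × (X → c)

def idxAlg (X : Type u) (i : Idx hκ T X) : TensorAlg (Pfull κ hκ) T := i.2.1.toAlg

variable (hκ) (T) in
/-- The ambient product of all test algebras. -/
def bigProd (X : Type u) : TensorAlg (Pfull κ hκ) T := prodAlg (idxAlg X)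

def jmap (X : Type u) : X → (bigProd hκ T X).carrier := fun x i => i.2.2 x

variable (hκ) (T) in
def genSet (X : Type u) : Set (bigProd hκ T X).carrier :=
  ⋂₀ {B | IsClosed (bigProd hκ T X) B ∧ Set.range (jmap X) ⊆ B}

theorem genSet_closed (X : Type u) : IsClosed (bigProd hκ T X) (genSet hκ T X) :=
  isClosed_sInter fun _ hB => hB.1

theorem jmap_mem_genSet (X : Type u) (x : X) : jmap X x ∈ genSet hκ T X :=
  Set.mem_sInter.mpr fun _ hB => hB.2 ⟨x, rfl⟩

theorem genSet_subset {X : Type u} {B : Set (bigProd hκ T X).carrier}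
    (hB : IsClosed (bigProd hκ T X) B) (hr : Set.range (jmap X) ⊆ B) : genSet hκ T X ⊆ B :=
  Set.sInter_subset_of_mem ⟨hB, hr⟩

variable (hκ) (T) in
/-- The free tensor algebra on `X`. -/
def freeAlg (X : Type u) : TensorAlg (Pfull κ hκ) T :=
  subalg (bigProd hκ T X) (genSet hκ T X) (genSet_closed X)

def freeUnit (X : Type u) : X → (freeAlg hκ T X).carrier :=
  fun x => ⟨jmap X x, jmap_mem_genSet X x⟩

/-- Existence part of the universal property. -/
theorem freeExt (hunc : Cardinal.aleph0 < κ) (X : Type u) (B : TensorAlg (Pfull κ hκ) T)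
    (v : X → B.carrier) :
    ∃ h : TensorAlgHom (freeAlg hκ T X) B, ∀ x, h.toFun (freeUnit X x) = v x := by
  classical
  obtain ⟨emb⟩ := (Cardinal.le_def _ _).mp (mk_dset_le B v)
  let c : Set (VType T X) := Set.range emb
  let e : (Dset B v) ≃ c := Equiv.ofInjective emb emb.injective
  let DA : TensorAlg (Pfull κ hκ) T := subalg B (Dset B v) (dset_isClosed hunc B v)
  let TA : TensorAlg (Pfull κ hκ) T := transport DA e
  let i₀ : Idx hκ T X := ⟨c, (algData TA : TAData (Pfull κ hκ) T c),
    fun x => e ⟨v x, range_subset_dset B v ⟨x, rfl⟩⟩⟩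
  let ψ : TensorAlgHom (bigProd hκ T X) B :=
    compHom (prodProj (idxAlg X) i₀ : TensorAlgHom (bigProd hκ T X) TA)
      (compHom (transportHomInv DA e) (subalgHom B (Dset B v) (dset_isClosed hunc B v)))
  refine ⟨compHom (subalgHom (bigProd hκ T X) (genSet hκ T X) (genSet_closed X)) ψ, fun x => ?_⟩
  show (e.symm (e ⟨v x, _⟩)).val = v x
  rw [Equiv.symm_apply_apply]

/-- Uniqueness part of the universal property. -/
theorem free_hom_ext (X : Type u) (B : TensorAlg (Pfull κ hκ) T)
    (h₁ h₂ : TensorAlgHom (freeAlg hκ T X) B)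
    (hx : ∀ x, h₁.toFun (freeUnit X x) = h₂.toFun (freeUnit X x)) : h₁ = h₂ := by
  set P := Pfull κ hκ
  let E : Set (bigProd hκ T X).carrier :=
    {w | ∃ hw : w ∈ genSet hκ T X, h₁.toFun ⟨w, hw⟩ = h₂.toFun ⟨w, hw⟩}
  have hEsub : E ⊆ genSet hκ T X := fun w hw => hw.choose
  have hval : ∀ {Y : Set (bigProd hκ T X).carrier} (hYE : Y ⊆ genSet hκ T X),
      (fun x : Y => Subtype.val (Set.inclusion hYE x)) = (Subtype.val : Y → _) := fun _ => rfl
  have hEclosed : IsClosed (bigProd hκ T X) E := by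
    constructor
    · intro p
      have hw : (bigProd hκ T X).α (P.map (TypeCat.ofHom Subtype.val) p) ∈ genSet hκ T X := by
        have := (genSet_closed X).1 (P.map (TypeCat.ofHom (Set.inclusion hEsub)) p)
        rwa [map_map, hval hEsub] at this
      refine ⟨hw, ?_⟩
      let tg : E → (freeAlg hκ T X).carrier := fun x => ⟨x.val, hEsub x.2⟩
      have hfa : (⟨(bigProd hκ T X).α (P.map (TypeCat.ofHom Subtype.val) p), hw⟩ : (freeAlg hκ T X).carrier)
          = (freeAlg hκ T X).α (P.map (TypeCat.ofHom tg) p) := by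
        apply Subtype.ext
        show _ = (bigProd hκ T X).α (P.map (TypeCat.ofHom (Subtype.val : (freeAlg hκ T X).carrier → _)) (P.map (TypeCat.ofHom tg) p))
        exact congrArg (bigProd hκ T X).α (map_map P tg Subtype.val p).symm
      rw [hfa, h₁.map_α, h₂.map_α]
      have h12 : (fun x : E => h₁.toFun (tg x)) = (fun x : E => h₂.toFun (tg x)) := by
        funext x
        obtain ⟨hw', heq⟩ := x.2
        exact heq
      rw [map_map, map_map, h12]
    · intro q
      have hw : (bigProd hκ T X).β (T.map (TypeCat.ofHom Subtype.val) q) ∈ genSet hκ T X := by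
        have := (genSet_closed X).2 (T.map (TypeCat.ofHom (Set.inclusion hEsub)) q)
        rwa [map_map, hval hEsub] at this
      refine ⟨hw, ?_⟩
      let tg : E → (freeAlg hκ T X).carrier := fun x => ⟨x.val, hEsub x.2⟩
      have hfa : (⟨(bigProd hκ T X).β (T.map (TypeCat.ofHom Subtype.val) q), hw⟩ : (freeAlg hκ T X).carrier)
          = (freeAlg hκ T X).β (T.map (TypeCat.ofHom tg) q) := by
        apply Subtype.ext
        show _ = (bigProd hκ T X).β (T.map (TypeCat.ofHom (Subtype.val : (freeAlg hκ T X).carrier → _)) (T.map (TypeCat.ofHom tg) q))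
        exact congrArg (bigProd hκ T X).β (map_map T tg Subtype.val q).symm
      rw [hfa, h₁.map_β, h₂.map_β]
      have h12 : (fun x : E => h₁.toFun (tg x)) = (fun x : E => h₂.toFun (tg x)) := by
        funext x
        obtain ⟨hw', heq⟩ := x.2
        exact heq
      rw [map_map, map_map, h12]
  have hrange : Set.range (jmap X) ⊆ E := by
    rintro w ⟨x, rfl⟩
    exact ⟨jmap_mem_genSet X x, hx x⟩
  have hgen : genSet hκ T X ⊆ E := genSet_subset hEclosed hrange
  apply TensorAlgHom.ext
  funext y
  obtain ⟨hw', heq⟩ := hgen y.2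
  exact heq

end Free

end

end PfullTensor
/-- Theorem 4.4 (for `P_κ`): for every regular uncountable cardinal `κ`, the full
`κ`-bounded powerset monad is tensorable: for every monad `T` the forgetful functor
from `(P_κ, T)`-tensor algebras to sets has a left adjoint. -/
theorem pfull_tensorable {κ : Cardinal.{u}} (hκ : κ.IsRegular)
    (hunc : Cardinal.aleph0 < κ) (T : Monad (Type u)) :
    ∃ F : Type u ⥤ TensorAlg (Pfull κ hκ) T, Nonempty (F ⊣ forgetTAlg (Pfull κ hκ) T) := by
  classical
  haveI hinit : ∀ X : Type u,
      Limits.HasInitial (StructuredArrow X (forgetTAlg (Pfull κ hκ) T)) := by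
    intro X
    refine Limits.IsInitial.hasInitial
      (X := StructuredArrow.mk (T := forgetTAlg (Pfull κ hκ) T)
        (Y := PfullTensor.freeAlg hκ T X) (TypeCat.ofHom (PfullTensor.freeUnit X))) ?_
    refine Limits.IsInitial.ofUniqueHom (fun d => ?_) (fun d m => ?_)
    · exact StructuredArrow.homMk
        ((PfullTensor.freeExt hunc X d.right d.hom).choose)
        (ConcreteCategory.hom_ext _ _ fun x => (PfullTensor.freeExt hunc X d.right d.hom).choose_spec x)
    · apply StructuredArrow.hom_ext
      apply PfullTensor.free_hom_ext X d.right
      intro x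
      have h1 := ConcreteCategory.congr_hom (StructuredArrow.w m) x
      have h2 := (PfullTensor.freeExt hunc X d.right d.hom).choose_spec x
      exact h1.trans h2.symm
  exact ⟨_, ⟨CategoryTheory.adjunctionOfStructuredArrowInitials (forgetTAlg (Pfull κ hκ) T)⟩⟩
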